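/- arXiv:1901.06665 — 5 statements merged into one kernel-verified Lean document; each statement's English description precedes it below -/
import Mathlib

section
/- Let L : ℝ³ × ℝ³ → ℝ³ be an ℝ-bilinear map such that L(q x, q y) = (det q) · q (L(x, y)) for all q ∈ O(3) and all x, y ∈ ℝ³. Then there exists c ∈ ℝ such that L(x, y) = c · (x × y) for all x, y ∈ ℝ³. -/
open Matrix

/-- The cross product on `ℝ³`. -/
def cross (x y : Fin 3 → ℝ) : Fin 3 → ℝ :=
  ![x 1 * y 2 - x 2 * y 1, x 2 * y 0 - x 0 * y 2, x 0 * y 1 - x 1 * y 0]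

private def E0 : Fin 3 → ℝ := ![1,0,0]
private def E1 : Fin 3 → ℝ := ![0,1,0]
private def E2 : Fin 3 → ℝ := ![0,0,1]

private def MD0 : Matrix (Fin 3) (Fin 3) ℝ := !![-1,0,0;0,1,0;0,0,1]
private def MD1 : Matrix (Fin 3) (Fin 3) ℝ := !![1,0,0;0,-1,0;0,0,1]
private def MD2 : Matrix (Fin 3) (Fin 3) ℝ := !![1,0,0;0,1,0;0,0,-1]
private def MS : Matrix (Fin 3) (Fin 3) ℝ := !![0,1,0;1,0,0;0,0,1]
private def MP : Matrix (Fin 3) (Fin 3) ℝ := !![0,0,1;1,0,0;0,1,0]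

private lemma oD0 : MD0ᵀ * MD0 = 1 := by
  rw [show MD0ᵀ = !![(-1:ℝ),0,0;0,1,0;0,0,1] from (Matrix.transposeᵣ_eq _).symm,
    Matrix.one_fin_three, MD0]
  norm_num [Matrix.mul_fin_three]

private lemma oD1 : MD1ᵀ * MD1 = 1 := by
  rw [show MD1ᵀ = !![(1:ℝ),0,0;0,-1,0;0,0,1] from (Matrix.transposeᵣ_eq _).symm,
    Matrix.one_fin_three, MD1]
  norm_num [Matrix.mul_fin_three]

private lemma oD2 : MD2ᵀ * MD2 = 1 := by
  rw [show MD2ᵀ = !![(1:ℝ),0,0;0,1,0;0,0,-1] from (Matrix.transposeᵣ_eq _).symm,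
    Matrix.one_fin_three, MD2]
  norm_num [Matrix.mul_fin_three]

private lemma oS : MSᵀ * MS = 1 := by
  rw [show MSᵀ = !![(0:ℝ),1,0;1,0,0;0,0,1] from (Matrix.transposeᵣ_eq _).symm,
    Matrix.one_fin_three, MS]
  norm_num [Matrix.mul_fin_three]

private lemma oP : MPᵀ * MP = 1 := by
  rw [show MPᵀ = !![(0:ℝ),1,0;0,0,1;1,0,0] from (Matrix.transposeᵣ_eq _).symm,
    Matrix.one_fin_three, MP]
  norm_num [Matrix.mul_fin_three]

private lemma dD0 : MD0.det = -1 := by norm_num [MD0, Matrix.det_fin_three, Matrix.cons_val_two]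
private lemma dD1 : MD1.det = -1 := by norm_num [MD1, Matrix.det_fin_three, Matrix.cons_val_two]
private lemma dD2 : MD2.det = -1 := by norm_num [MD2, Matrix.det_fin_three, Matrix.cons_val_two]
private lemma dS : MS.det = -1 := by norm_num [MS, Matrix.det_fin_three, Matrix.cons_val_two]
private lemma dP : MP.det = 1 := by norm_num [MP, Matrix.det_fin_three, Matrix.cons_val_two]

private lemma mD0 (w : Fin 3 → ℝ) : MD0.mulVec w = ![-w 0, w 1, w 2] := by
  funext i; fin_cases i <;> simp [MD0, Matrix.mulVec, dotProduct, Fin.sum_univ_three, Matrix.vecHead, Matrix.vecTail]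
private lemma mD1 (w : Fin 3 → ℝ) : MD1.mulVec w = ![w 0, -w 1, w 2] := by
  funext i; fin_cases i <;> simp [MD1, Matrix.mulVec, dotProduct, Fin.sum_univ_three, Matrix.vecHead, Matrix.vecTail]
private lemma mD2 (w : Fin 3 → ℝ) : MD2.mulVec w = ![w 0, w 1, -w 2] := by
  funext i; fin_cases i <;> simp [MD2, Matrix.mulVec, dotProduct, Fin.sum_univ_three, Matrix.vecHead, Matrix.vecTail]
private lemma mS (w : Fin 3 → ℝ) : MS.mulVec w = ![w 1, w 0, w 2] := by
  funext i; fin_cases i <;> simp [MS, Matrix.mulVec, dotProduct, Fin.sum_univ_three, Matrix.vecHead, Matrix.vecTail]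
private lemma mP (w : Fin 3 → ℝ) : MP.mulVec w = ![w 2, w 0, w 1] := by
  funext i; fin_cases i <;> simp [MP, Matrix.mulVec, dotProduct, Fin.sum_univ_three, Matrix.vecHead, Matrix.vecTail]

private lemma negE0 : ![(-1:ℝ),0,0] = -E0 := by funext i; fin_cases i <;> norm_num [E0]
private lemma negE1 : ![(0:ℝ),-1,0] = -E1 := by funext i; fin_cases i <;> norm_num [E1]
private lemma negE2 : ![(0:ℝ),0,-1] = -E2 := by funext i; fin_cases i <;> norm_num [E2]

/-- Any bilinear map `L : ℝ³ × ℝ³ → ℝ³` satisfying `L(qx, qy) = (det q) · q L(x,y)` for all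
orthogonal `q` is a scalar multiple of the cross product. -/
theorem stmt_0 (L : (Fin 3 → ℝ) →ₗ[ℝ] (Fin 3 → ℝ) →ₗ[ℝ] (Fin 3 → ℝ))
    (hL : ∀ q : Matrix (Fin 3) (Fin 3) ℝ, qᵀ * q = 1 →
      ∀ x y : Fin 3 → ℝ, L (q.mulVec x) (q.mulVec y) = q.det • q.mulVec (L x y)) :
    ∃ c : ℝ, ∀ x y : Fin 3 → ℝ, L x y = c • cross x y := by
  have hD0 := hL MD0 oD0
  have hD1 := hL MD1 oD1
  have hD2 := hL MD2 oD2
  have hS := hL MS oS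
  have hP := hL MP oP
  set a : ℝ := (L E0 E1) 2 with ha
  -- mulVec on basis vectors
  have mD0E0 : MD0.mulVec E0 = -E0 := by rw [mD0]; rw [← negE0]; norm_num [E0, Matrix.cons_val_two]
  have mD0E1 : MD0.mulVec E1 = E1 := by rw [mD0]; funext i; fin_cases i <;> norm_num [E1, Matrix.cons_val_two]
  have mD0E2 : MD0.mulVec E2 = E2 := by rw [mD0]; funext i; fin_cases i <;> norm_num [E2, Matrix.cons_val_two]
  have mD1E0 : MD1.mulVec E0 = E0 := by rw [mD1]; funext i; fin_cases i <;> norm_num [E0, Matrix.cons_val_two]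
  have mD1E1 : MD1.mulVec E1 = -E1 := by rw [mD1]; funext i; fin_cases i <;> norm_num [E1, Matrix.cons_val_two]
  have mD1E2 : MD1.mulVec E2 = E2 := by rw [mD1]; funext i; fin_cases i <;> norm_num [E2, Matrix.cons_val_two]
  have mD2E0 : MD2.mulVec E0 = E0 := by rw [mD2]; funext i; fin_cases i <;> norm_num [E0, Matrix.cons_val_two]
  have mD2E1 : MD2.mulVec E1 = E1 := by rw [mD2]; funext i; fin_cases i <;> norm_num [E1, Matrix.cons_val_two]
  have mD2E2 : MD2.mulVec E2 = -E2 := by rw [mD2]; funext i; fin_cases i <;> norm_num [E2, Matrix.cons_val_two]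
  have mSE0 : MS.mulVec E0 = E1 := by rw [mS]; funext i; fin_cases i <;> norm_num [E0, E1, Matrix.cons_val_two]
  have mSE1 : MS.mulVec E1 = E0 := by rw [mS]; funext i; fin_cases i <;> norm_num [E0, E1, Matrix.cons_val_two]
  have mPE0 : MP.mulVec E0 = E1 := by rw [mP]; funext i; fin_cases i <;> norm_num [E0, E1, Matrix.cons_val_two]
  have mPE1 : MP.mulVec E1 = E2 := by rw [mP]; funext i; fin_cases i <;> norm_num [E1, E2, Matrix.cons_val_two]
  have mPE2 : MP.mulVec E2 = E0 := by rw [mP]; funext i; fin_cases i <;> norm_num [E0, E2, Matrix.cons_val_two]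
  -- L on diagonal basis pairs vanishes
  have h00 : L E0 E0 = 0 := by
    have A := hD1 E0 E0; rw [mD1E0, dD1, mD1] at A
    have B := hD2 E0 E0; rw [mD2E0, dD2, mD2] at B
    have A0 := congrFun A 0; have B1 := congrFun B 1; have A2 := congrFun A 2
    simp at A0 B1 A2
    funext i; fin_cases i <;> simp <;> linarith
  have h11 : L E1 E1 = 0 := by
    have A := hD0 E1 E1; rw [mD0E1, dD0, mD0] at A
    have B := hD2 E1 E1; rw [mD2E1, dD2, mD2] at B
    have B0 := congrFun B 0; have A1 := congrFun A 1; have A2 := congrFun A 2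
    simp at B0 A1 A2
    funext i; fin_cases i <;> simp <;> linarith
  have h22 : L E2 E2 = 0 := by
    have A := hD0 E2 E2; rw [mD0E2, dD0, mD0] at A
    have B := hD1 E2 E2; rw [mD1E2, dD1, mD1] at B
    have B0 := congrFun B 0; have A1 := congrFun A 1; have A2 := congrFun A 2
    simp at B0 A1 A2
    funext i; fin_cases i <;> simp <;> linarith
  have h01 : L E0 E1 = ![0, 0, a] := by
    have A := hD0 E0 E1; rw [mD0E0, mD0E1, dD0, mD0, map_neg, LinearMap.neg_apply] at A
    have B := hD1 E0 E1; rw [mD1E0, mD1E1, dD1, mD1, map_neg] at B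
    have A0 := congrFun A 0; have B1 := congrFun B 1
    simp at A0 B1
    funext i; fin_cases i <;> simp [ha] <;> linarith
  have h10 : L E1 E0 = ![0, 0, -a] := by
    have A := hS E0 E1; rw [mSE0, mSE1, dS, h01, mS] at A
    rw [A]; funext i; fin_cases i <;> simp
  have h12 : L E1 E2 = ![a, 0, 0] := by
    have A := hP E0 E1; rw [mPE0, mPE1, dP, h01, mP] at A
    rw [A]; funext i; fin_cases i <;> simp
  have h20 : L E2 E0 = ![0, a, 0] := by
    have A := hP E1 E2; rw [mPE1, mPE2, dP, h12, mP] at A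
    rw [A]; funext i; fin_cases i <;> simp
  have h21 : L E2 E1 = ![-a, 0, 0] := by
    have A := hP E1 E0; rw [mPE1, mPE0, dP, h10, mP] at A
    rw [A]; funext i; fin_cases i <;> simp
  have h02 : L E0 E2 = ![0, -a, 0] := by
    have A := hP E2 E1; rw [mPE2, mPE1, dP, h21, mP] at A
    rw [A]; funext i; fin_cases i <;> simp
  refine ⟨a, fun x y => ?_⟩
  have hx : x = x 0 • E0 + x 1 • E1 + x 2 • E2 := by
    funext i; fin_cases i <;> simp [E0, E1, E2]
  have hy : y = y 0 • E0 + y 1 • E1 + y 2 • E2 := by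
    funext i; fin_cases i <;> simp [E0, E1, E2]
  conv_lhs => rw [hx, hy]
  simp only [map_add, _root_.map_smul, LinearMap.add_apply, LinearMap.smul_apply,
    h00, h11, h22, h01, h10, h12, h21, h20, h02, smul_zero]
  funext i; fin_cases i <;>
    simp [cross, Pi.add_apply, Pi.smul_apply, smul_eq_mul] <;> ring
end

section
/- The ℝ-bilinear skew-symmetric bracket on ℝ³ × ℝ³ × 𝔰 × ℝ³ defined by [(x₁,y₁,S₁,z₁),(x₂,y₂,S₂,z₂)] = (0, x₁×x₂, x₁⊙y₂ − y₁⊙x₂, x₁×y₂ + y₁×x₂) satisfies the Jacobi identity; moreover [[[u₁,u₂],u₃],u₄] = 0 for all u₁,u₂,u₃,u₄, while there exist u, v, w with [[u,v],w] ≠ 0. Hence this bracket makes the 14-dimensional space ℝ³ × ℝ³ × 𝔰 × ℝ³ into a nilpotent Lie algebra of step exactly 3 (a model of the free nilpotent Lie algebra 𝖿[3,3] of rank 3 and step 3). -/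
open Matrix

/-- The symmetrized traceless product `x ⊙ y = (1/2)(y xᵀ + x yᵀ) − (⟨x,y⟩/3) I₃`. -/
noncomputable def odot (x y : Fin 3 → ℝ) : Matrix (Fin 3) (Fin 3) ℝ :=
  (1/2 : ℝ) • (vecMulVec y x + vecMulVec x y) - ((x ⬝ᵥ y) / 3) • (1 : Matrix (Fin 3) (Fin 3) ℝ)

/-- The underlying space `ℝ³ × ℝ³ × 𝔰 × ℝ³` of the free nilpotent Lie algebra `𝖿[3,3]`. -/
abbrev F14 := (Fin 3 → ℝ) × (Fin 3 → ℝ) × Matrix (Fin 3) (Fin 3) ℝ × (Fin 3 → ℝ)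

/-- The bracket `[(x₁,y₁,S₁,z₁),(x₂,y₂,S₂,z₂)] =
(0, x₁×x₂, x₁⊙y₂ − y₁⊙x₂, x₁×y₂ + y₁×x₂)` of `𝖿[3,3]`. -/
noncomputable def fBracket (u v : F14) : F14 :=
  ( 0,
    cross u.1 v.1,
    odot u.1 v.2.1 - odot u.2.1 v.1,
    cross u.1 v.2.1 + cross u.2.1 v.1 )

lemma cross_zero_left (y : Fin 3 → ℝ) : cross 0 y = 0 := by
  funext i; fin_cases i <;> simp [cross]

lemma odot_zero_left (y : Fin 3 → ℝ) : odot 0 y = 0 := by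
  ext i j
  simp [odot, vecMulVec, dotProduct]

lemma odot_zero_right (x : Fin 3 → ℝ) : odot x 0 = 0 := by
  ext i j
  simp [odot, vecMulVec, dotProduct]

lemma crossJacobi3 (a b c : Fin 3 → ℝ) :
    cross (cross a b) c + cross (cross b c) a + cross (cross c a) b = 0 := by
  funext i; fin_cases i <;> simp [cross] <;> ring

set_option maxHeartbeats 1000000 in
lemma odot_cross_cyc (a b c : Fin 3 → ℝ) :
    odot (cross a b) c + odot (cross b c) a + odot (cross c a) b = 0 := by
  ext i j
  fin_cases i <;> fin_cases j <;>
    simp [odot, cross, vecMulVec, dotProduct, Fin.sum_univ_three, Matrix.one_apply] <;> ring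

/-- The bracket of `𝖿[3,3]` satisfies the Jacobi identity, all fourfold brackets vanish,
and some threefold bracket is nonzero: it defines a nilpotent Lie algebra of step exactly
three. -/
theorem stmt_6 :
    (∀ u v w : F14,
      fBracket (fBracket u v) w + fBracket (fBracket v w) u + fBracket (fBracket w u) v = 0)
    ∧ (∀ u₁ u₂ u₃ u₄ : F14, fBracket (fBracket (fBracket u₁ u₂) u₃) u₄ = 0)
    ∧ (∃ u v w : F14, fBracket (fBracket u v) w ≠ 0) := by
  refine ⟨?_, ?_, ?_⟩
  · intro u v w
    show (_, _, _, _) = ((0:Fin 3 → ℝ), (0:Fin 3 → ℝ), (0:Matrix (Fin 3) (Fin 3) ℝ), (0:Fin 3 → ℝ))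
    simp only [fBracket, Prod.mk_add_mk, Prod.mk.injEq]
    refine ⟨by simp, by simp [cross_zero_left], ?_, ?_⟩
    · have h := odot_cross_cyc u.1 v.1 w.1
      simp only [odot_zero_left, zero_sub]
      linear_combination (norm := abel) -h
    · simp only [cross_zero_left, zero_add]
      exact crossJacobi3 u.1 v.1 w.1
  · intro u₁ u₂ u₃ u₄
    show (_, _, _, _) = ((0:Fin 3 → ℝ), (0:Fin 3 → ℝ), (0:Matrix (Fin 3) (Fin 3) ℝ), (0:Fin 3 → ℝ))
    simp only [fBracket, Prod.mk.injEq]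
    refine ⟨trivial, ?_, ?_, ?_⟩ <;>
      simp [cross_zero_left, odot_zero_left, odot_zero_right]
  · refine ⟨(![1,0,0], 0, 0, 0), (![0,1,0], 0, 0, 0), (![1,0,0], 0, 0, 0), ?_⟩
    intro h
    have := congrFun (congrArg (fun p : F14 => p.2.2.2) h) 1
    simp [fBracket, cross] at this
end

section
/- Fix a₁, a₂, c ∈ ℝ and let 𝔪_c = {(x, y, z, c·x − c²·y + c³·z) : x, y, z ∈ ℝ³} ⊆ 𝔤(a₁, a₂). Then 𝔪_c is closed under the bracket of 𝔤(a₁, a₂) if and only if c⁴ = a₁ c² + a₂. -/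
open Matrix

abbrev V3 := Fin 3 → ℝ

/-- The underlying space `ℝ³ × ℝ³ × ℝ³ × ℝ³` of `𝔤(a₁, a₂)`. -/
abbrev G4 := V3 × V3 × V3 × V3

/-- The bracket of `𝔤(a₁, a₂)`, the Lie algebra of the isometry group of the
sub-Riemannian model space `𝖢₃,₃(a₁,a₂)`. -/
def gBracket (a₁ a₂ : ℝ) (u v : G4) : G4 :=
  let x₁ := u.1; let y₁ := u.2.1; let z₁ := u.2.2.1; let w₁ := u.2.2.2
  let x₂ := v.1; let y₂ := v.2.1; let z₂ := v.2.2.1; let w₂ := v.2.2.2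
  ( cross w₁ x₂ + cross x₁ w₂ + a₂ • (cross y₁ z₂ + cross z₁ y₂),
    cross w₁ y₂ + cross y₁ w₂ + cross x₁ x₂
      + a₁ • (cross x₁ z₂ + cross z₁ x₂ + cross y₁ y₂ + a₁ • cross z₁ z₂)
      + a₂ • cross z₁ z₂,
    cross w₁ z₂ + cross z₁ w₂ + cross x₁ y₂ + cross y₁ x₂ + a₁ • (cross y₁ z₂ + cross z₁ y₂),
    cross w₁ w₂ + a₂ • (cross x₁ z₂ + cross z₁ x₂ + cross y₁ y₂ + a₁ • cross z₁ z₂) )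

/-- The subspace `𝔪_c = {(x, y, z, c·x − c²·y + c³·z)}` of `𝔤(a₁,a₂)` is closed under the
bracket if and only if `c⁴ = a₁ c² + a₂`. -/
theorem stmt_8 (a₁ a₂ c : ℝ) :
    (∀ u v : G4,
        u.2.2.2 = c • u.1 - c ^ 2 • u.2.1 + c ^ 3 • u.2.2.1 →
        v.2.2.2 = c • v.1 - c ^ 2 • v.2.1 + c ^ 3 • v.2.2.1 →
        (gBracket a₁ a₂ u v).2.2.2 =
          c • (gBracket a₁ a₂ u v).1 - c ^ 2 • (gBracket a₁ a₂ u v).2.1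
            + c ^ 3 • (gBracket a₁ a₂ u v).2.2.1)
    ↔ c ^ 4 = a₁ * c ^ 2 + a₂ := by
  constructor
  · intro H
    have key := H (![1,0,0], 0, 0, c • ![1,0,0]) (0, 0, ![0,1,0], c ^ 3 • ![0,1,0])
      (by ext i; fin_cases i <;> simp) (by ext i; fin_cases i <;> simp)
    have h2 := congrFun key 2
    simp only [gBracket, cross, Pi.smul_apply, Pi.add_apply, Pi.sub_apply, Pi.zero_apply,
      smul_eq_mul] at h2
    simp [Matrix.cons_val_two, Matrix.vecHead, Matrix.vecTail] at h2
    nlinarith [h2]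
  · intro h u v hu hv
    have ha : a₂ = c ^ 4 - a₁ * c ^ 2 := by linarith
    subst ha
    obtain ⟨x₁, y₁, z₁, w₁⟩ := u
    obtain ⟨x₂, y₂, z₂, w₂⟩ := v
    simp only at hu hv
    subst hu hv
    refine funext fun i => ?_
    fin_cases i <;>
      · simp only [gBracket, cross, Pi.smul_apply, Pi.add_apply, Pi.sub_apply, smul_eq_mul,
          Matrix.cons_val_zero, Matrix.cons_val_one, Matrix.head_cons]
        norm_num
        ring
end

section
/- Let a₁, a₂ ∈ ℝ with a₁² + 4a₂ > 0, and set k = (a₁ + √(a₁²+4a₂))/2 and k̂ = (a₁ − √(a₁²+4a₂))/2. Then the linear map ψ : 𝔤(a₁,a₂) → 𝔟_k × 𝔟_k̂ given by ψ(x,y,z,w) = ((x + k·z, w + k·y), (x + k̂·z, w + k̂·y)) is bijective and satisfies ψ([u,v]) = [ψ(u), ψ(v)] for all u, v ∈ 𝔤(a₁,a₂), where 𝔟_k × 𝔟_k̂ carries the componentwise (direct sum) bracket. -/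
open Matrix

/-- The bracket of `𝔟_k` on `ℝ³ × ℝ³`:
`[(x₁,y₁),(x₂,y₂)] = (x₁×y₂ + y₁×x₂, k·(x₁×x₂) + y₁×y₂)`. -/
def bBracket (k : ℝ) (u v : V3 × V3) : V3 × V3 :=
  (cross u.1 v.2 + cross u.2 v.1, k • cross u.1 v.1 + cross u.2 v.2)

lemma bracket_key (a₁ k : ℝ) (u v : G4) :
    bBracket k (u.1 + k • u.2.2.1, u.2.2.2 + k • u.2.1)
        (v.1 + k • v.2.2.1, v.2.2.2 + k • v.2.1) =
      ((gBracket a₁ (k ^ 2 - a₁ * k) u v).1 + k • (gBracket a₁ (k ^ 2 - a₁ * k) u v).2.2.1,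
        (gBracket a₁ (k ^ 2 - a₁ * k) u v).2.2.2 +
          k • (gBracket a₁ (k ^ 2 - a₁ * k) u v).2.1) := by
  refine Prod.ext (funext fun i => ?_) (funext fun i => ?_) <;>
    simp only [bBracket, gBracket, cross, Pi.add_apply, Pi.smul_apply, smul_eq_mul] <;>
    fin_cases i <;>
    simp [Matrix.cons_val_zero, Matrix.cons_val_one, Matrix.head_cons] <;> ring

/-- If `a₁² + 4a₂ > 0` then `ψ(x,y,z,w) = ((x + k·z, w + k·y), (x + k̂·z, w + k̂·y))` is a
Lie algebra isomorphism `𝔤(a₁,a₂) → 𝔟_k ⊕ 𝔟_k̂`, where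
`k = (a₁ + √(a₁²+4a₂))/2` and `k̂ = (a₁ − √(a₁²+4a₂))/2`. -/
theorem stmt_9 (a₁ a₂ : ℝ) (h : a₁ ^ 2 + 4 * a₂ > 0) :
    let k := (a₁ + Real.sqrt (a₁ ^ 2 + 4 * a₂)) / 2
    let k' := (a₁ - Real.sqrt (a₁ ^ 2 + 4 * a₂)) / 2
    let ψ : G4 → (V3 × V3) × (V3 × V3) := fun u =>
      ((u.1 + k • u.2.2.1, u.2.2.2 + k • u.2.1), (u.1 + k' • u.2.2.1, u.2.2.2 + k' • u.2.1))
    Function.Bijective ψ ∧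
      ∀ u v : G4, ψ (gBracket a₁ a₂ u v) =
        (bBracket k (ψ u).1 (ψ v).1, bBracket k' (ψ u).2 (ψ v).2) := by
  intro k k' ψ
  set s := Real.sqrt (a₁ ^ 2 + 4 * a₂) with hs_def
  have hs2 : s ^ 2 = a₁ ^ 2 + 4 * a₂ := Real.sq_sqrt h.le
  have hs0 : s ≠ 0 := by
    intro h0
    rw [h0] at hs2
    nlinarith
  have hk : k ^ 2 - a₁ * k = a₂ := by
    show ((a₁ + s) / 2) ^ 2 - a₁ * ((a₁ + s) / 2) = a₂
    nlinarith [hs2]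
  have hk' : k' ^ 2 - a₁ * k' = a₂ := by
    show ((a₁ - s) / 2) ^ 2 - a₁ * ((a₁ - s) / 2) = a₂
    nlinarith [hs2]
  have hkk : k - k' = s := by
    show (a₁ + s) / 2 - (a₁ - s) / 2 = s; ring
  constructor
  · apply Function.bijective_iff_has_inverse.mpr
    refine ⟨fun p =>
      (p.1.1 - k • (s⁻¹ • (p.1.1 - p.2.1)), s⁻¹ • (p.1.2 - p.2.2),
        s⁻¹ • (p.1.1 - p.2.1), p.1.2 - k • (s⁻¹ • (p.1.2 - p.2.2))), ?_, ?_⟩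
    · intro u
      have hk1 : k = (a₁ + s) / 2 := rfl
      refine Prod.ext (funext fun i => ?_) (Prod.ext (funext fun i => ?_)
        (Prod.ext (funext fun i => ?_) (funext fun i => ?_))) <;>
      · simp only [ψ, Pi.add_apply, Pi.smul_apply, Pi.sub_apply, smul_eq_mul, hk1]
        have : k' = (a₁ - s) / 2 := rfl
        rw [this]
        field_simp
        try ring
    · intro p
      have hk1 : k = (a₁ + s) / 2 := rfl
      have hk2 : k' = (a₁ - s) / 2 := rfl
      refine Prod.ext (Prod.ext (funext fun i => ?_) (funext fun i => ?_))
        (Prod.ext (funext fun i => ?_) (funext fun i => ?_)) <;>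
      · simp only [ψ, Pi.add_apply, Pi.smul_apply, Pi.sub_apply, smul_eq_mul, hk1, hk2]
        field_simp
        try ring
  · intro u v
    have h1 := bracket_key a₁ k u v
    have h2 := bracket_key a₁ k' u v
    rw [hk] at h1
    rw [hk'] at h2
    simp only [ψ]
    exact Prod.ext h1.symm h2.symm
end

section
/- For all a₁, a₂ ∈ ℝ and λ ≠ 0, the linear map ψ_λ(x,y,z,w) = (λ·x, λ²·y, λ³·z, w) is a bijection from 𝔤(λ²·a₁, λ⁴·a₂) to 𝔤(a₁, a₂) satisfying ψ_λ([u,v]) = [ψ_λ(u), ψ_λ(v)], where the bracket on the source is that of 𝔤(λ²·a₁, λ⁴·a₂) and the bracket on the target is that of 𝔤(a₁, a₂). In particular, 𝔤(a₁, a₂) and 𝔤(a₁/λ², a₂/λ⁴) are isomorphic Lie algebras, reflecting the scaling relation λ·𝖢₃,₃(a₁,a₂) = 𝖢₃,₃(a₁/λ², a₂/λ⁴). -/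
open Matrix

/-- For `λ ≠ 0`, the map `ψ_λ(x,y,z,w) = (λ·x, λ²·y, λ³·z, w)` is a Lie algebra
isomorphism from `𝔤(λ²·a₁, λ⁴·a₂)` onto `𝔤(a₁, a₂)`, reflecting the scaling relation
`λ·𝖢₃,₃(a₁,a₂) = 𝖢₃,₃(a₁/λ², a₂/λ⁴)`. -/
theorem stmt_19 (a₁ a₂ lam : ℝ) (hlam : lam ≠ 0) :
    let ψ : G4 → G4 := fun u => (lam • u.1, lam ^ 2 • u.2.1, lam ^ 3 • u.2.2.1, u.2.2.2)
    Function.Bijective ψ ∧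
      ∀ u v : G4,
        ψ (gBracket (lam ^ 2 * a₁) (lam ^ 4 * a₂) u v) = gBracket a₁ a₂ (ψ u) (ψ v) := by
  intro ψ
  constructor
  · have h2 : lam ^ 2 ≠ 0 := pow_ne_zero _ hlam
    have h3 : lam ^ 3 ≠ 0 := pow_ne_zero _ hlam
    refine ⟨fun u v h => ?_, fun u => ⟨(lam⁻¹ • u.1, (lam ^ 2)⁻¹ • u.2.1, (lam ^ 3)⁻¹ • u.2.2.1, u.2.2.2), ?_⟩⟩
    · have hx := congrArg Prod.fst h
      have hy := congrArg (fun p : G4 => p.2.1) h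
      have hz := congrArg (fun p : G4 => p.2.2.1) h
      have hw := congrArg (fun p : G4 => p.2.2.2) h
      simp only [ψ] at hx hy hz hw
      exact Prod.ext (smul_right_injective V3 hlam hx)
        (Prod.ext (smul_right_injective V3 h2 hy)
          (Prod.ext (smul_right_injective V3 h3 hz) hw))
    · simp [ψ, smul_smul, mul_inv_cancel₀ hlam, mul_inv_cancel₀ h2, mul_inv_cancel₀ h3]
  · intro u v
    obtain ⟨x₁, y₁, z₁, w₁⟩ := u
    obtain ⟨x₂, y₂, z₂, w₂⟩ := v
    simp only [ψ, gBracket]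
    refine Prod.ext ?_ (Prod.ext ?_ (Prod.ext ?_ ?_)) <;>
      funext i <;> fin_cases i <;>
      simp only [cross, Pi.add_apply, Pi.smul_apply, smul_eq_mul,
        Matrix.cons_val_zero, Matrix.cons_val_one, Matrix.head_cons,
        Matrix.cons_val_two, Matrix.tail_cons, Fin.isValue, Fin.mk_one,
        Fin.zero_eta, Fin.reduceFinMk] <;> ring
end
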